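/- Let D > 0, L₀ > 0, c ∈ ℝ and λ ∈ ℝ. Suppose φ : [0, L₀] → ℝ is twice continuously differentiable, φ(0) = φ(L₀) = 0, φ(ξ) > 0 for all ξ ∈ (0, L₀), and D φ''(ξ) + c φ'(ξ) + λ φ(ξ) = 0 for all ξ ∈ (0, L₀). Then λ = Dπ²/L₀² + c²/(4D). -/

import Mathlib

open Set Real

/-- If `φ` is C² on `[0, L₀]`, vanishes at the endpoints, is positive on
`(0, L₀)`, and satisfies `D φ'' + c φ' + λ φ = 0` on `(0, L₀)`, then
`λ = Dπ²/L₀² + c²/(4D)`. -/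
theorem stmt2 (D L₀ c lam : ℝ) (hD : 0 < D) (hL₀ : 0 < L₀)
    (φ : ℝ → ℝ) (hreg : ContDiffOn ℝ 2 φ (Icc 0 L₀))
    (hbc0 : φ 0 = 0) (hbcL : φ L₀ = 0)
    (hpos : ∀ ξ ∈ Ioo 0 L₀, 0 < φ ξ)
    (hode : ∀ ξ ∈ Ioo 0 L₀,
      D * deriv (deriv φ) ξ + c * deriv φ ξ + lam * φ ξ = 0) :
    lam = D * π ^ 2 / L₀ ^ 2 + c ^ 2 / (4 * D) := by
  set a : ℝ := c / (2 * D) with ha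
  set b : ℝ := π / L₀ with hb
  have hDne : D ≠ 0 := hD.ne'
  have hLne : L₀ ≠ 0 := hL₀.ne'
  have hca : c = 2 * D * a := by rw [ha]; field_simp
  have hb_pos : 0 < b := div_pos pi_pos hL₀
  set lam' : ℝ := D * b ^ 2 + D * a ^ 2 with hlam'
  set g : ℝ → ℝ := fun ξ => exp (-a * ξ) * sin (b * ξ) with hgdef
  set g' : ℝ → ℝ := fun ξ => exp (-a * ξ) * (b * cos (b * ξ) - a * sin (b * ξ)) with hg'def
  set ψ : ℝ → ℝ := derivWithin φ (Icc 0 L₀) with hψdef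
  set W : ℝ → ℝ := fun ξ => exp (2 * a * ξ) * (ψ ξ * g ξ - φ ξ * g' ξ) with hWdef
  set q : ℝ → ℝ := fun ξ => exp (2 * a * ξ) * (φ ξ * g ξ) with hqdef
  -- derivatives of g and g'
  have hlin : ∀ (k ξ : ℝ), HasDerivAt (fun ξ : ℝ => k * ξ) k ξ := by
    intro k ξ
    simpa using (hasDerivAt_id ξ).const_mul k
  have hexp : ∀ ξ : ℝ, HasDerivAt (fun ξ : ℝ => exp (-a * ξ)) (exp (-a * ξ) * (-a)) ξ := by
    intro ξ
    exact (hlin (-a) ξ).exp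
  have hsin : ∀ ξ : ℝ, HasDerivAt (fun ξ : ℝ => sin (b * ξ)) (cos (b * ξ) * b) ξ := by
    intro ξ
    exact (hlin b ξ).sin
  have hcos : ∀ ξ : ℝ, HasDerivAt (fun ξ : ℝ => cos (b * ξ)) (-sin (b * ξ) * b) ξ := by
    intro ξ
    exact (hlin b ξ).cos
  have hgd : ∀ ξ : ℝ, HasDerivAt g (g' ξ) ξ := by
    intro ξ
    have := (hexp ξ).mul (hsin ξ)
    exact this.congr_deriv (by simp only [hg'def]; ring)
  have hg'd : ∀ ξ : ℝ, HasDerivAt g'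
      (exp (-a * ξ) * ((a ^ 2 - b ^ 2) * sin (b * ξ) - 2 * a * b * cos (b * ξ))) ξ := by
    intro ξ
    have h1 : HasDerivAt (fun ξ : ℝ => b * cos (b * ξ) - a * sin (b * ξ))
        (b * (-sin (b * ξ) * b) - a * (cos (b * ξ) * b)) ξ :=
      ((hcos ξ).const_mul b).sub ((hsin ξ).const_mul a)
    have := (hexp ξ).mul h1
    exact this.congr_deriv (by ring)
  -- facts about φ near interior points
  have hmem : ∀ ξ ∈ Ioo (0:ℝ) L₀, Icc (0:ℝ) L₀ ∈ nhds ξ := fun ξ hξ => Icc_mem_nhds hξ.1 hξ.2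
  have hψ_eq : ∀ ξ ∈ Ioo (0:ℝ) L₀, ψ ξ = deriv φ ξ := fun ξ hξ =>
    derivWithin_of_mem_nhds (hmem ξ hξ)
  have hregIoo : ContDiffOn ℝ 2 φ (Ioo 0 L₀) := hreg.mono Ioo_subset_Icc_self
  have hderivCD : ContDiffOn ℝ 1 (deriv φ) (Ioo 0 L₀) :=
    hregIoo.deriv_of_isOpen isOpen_Ioo (by norm_num)
  have hφd : ∀ ξ ∈ Ioo (0:ℝ) L₀, HasDerivAt φ (deriv φ ξ) ξ := by
    intro ξ hξ
    exact ((hreg.contDiffAt (hmem ξ hξ)).differentiableAt (by norm_num)).hasDerivAt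
  have hψd : ∀ ξ ∈ Ioo (0:ℝ) L₀, HasDerivAt ψ (deriv (deriv φ) ξ) ξ := by
    intro ξ hξ
    have h1 : HasDerivAt (deriv φ) (deriv (deriv φ) ξ) ξ :=
      (((hderivCD.contDiffAt (isOpen_Ioo.mem_nhds hξ)).differentiableAt (by norm_num))).hasDerivAt
    apply h1.congr_of_eventuallyEq
    filter_upwards [isOpen_Ioo.mem_nhds hξ] with y hy
    exact derivWithin_of_mem_nhds (hmem y hy)
  -- derivative of W
  have hWd : ∀ ξ ∈ Ioo (0:ℝ) L₀, HasDerivAt W ((lam' - lam) / D * q ξ) ξ := by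
    intro ξ hξ
    have hE : HasDerivAt (fun ξ : ℝ => exp (2 * a * ξ)) (exp (2 * a * ξ) * (2 * a)) ξ :=
      (hlin (2 * a) ξ).exp
    have hF : HasDerivAt (fun ξ => ψ ξ * g ξ - φ ξ * g' ξ)
        ((deriv (deriv φ) ξ * g ξ + ψ ξ * g' ξ) -
          (deriv φ ξ * g' ξ +
            φ ξ * (exp (-a * ξ) * ((a ^ 2 - b ^ 2) * sin (b * ξ) - 2 * a * b * cos (b * ξ))))) ξ :=
      ((hψd ξ hξ).mul (hgd ξ)).sub ((hφd ξ hξ).mul (hg'd ξ))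
    have := hE.mul hF
    apply this.congr_deriv
    have hφ'' : deriv (deriv φ) ξ = -(2 * a) * deriv φ ξ - lam / D * φ ξ := by
      have h0 := hode ξ hξ
      rw [hca] at h0
      field_simp
      linarith
    rw [hψ_eq ξ hξ, hφ'']
    simp only [hqdef, hgdef, hg'def, hlam']
    field_simp
    ring
  -- continuity
  have hgc : Continuous g := by
    fun_prop
  have hg'c : Continuous g' := by
    fun_prop
  have hψc : ContinuousOn ψ (Icc 0 L₀) :=
    hreg.continuousOn_derivWithin (uniqueDiffOn_Icc hL₀) (by norm_num)
  have hWc : ContinuousOn W (Icc 0 L₀) := by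
    apply ContinuousOn.mul (Continuous.continuousOn (by fun_prop))
    exact (hψc.mul hgc.continuousOn).sub (hreg.continuousOn.mul hg'c.continuousOn)
  have hqc : ContinuousOn q (Icc 0 L₀) := by
    apply ContinuousOn.mul (Continuous.continuousOn (by fun_prop))
    exact hreg.continuousOn.mul hgc.continuousOn
  have hqint : IntervalIntegrable q MeasureTheory.volume 0 L₀ := by
    apply ContinuousOn.intervalIntegrable
    rwa [uIcc_of_le hL₀.le]
  have hint : IntervalIntegrable (fun ξ => (lam' - lam) / D * q ξ) MeasureTheory.volume 0 L₀ :=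
    hqint.const_mul _
  -- FTC
  have hFTC : ∫ ξ in (0:ℝ)..L₀, (lam' - lam) / D * q ξ = W L₀ - W 0 :=
    intervalIntegral.integral_eq_sub_of_hasDerivAt_of_le hL₀.le hWc hWd hint
  have hW0 : W 0 = 0 := by simp [hWdef, hgdef, hg'def, hbc0]
  have hWL : W L₀ = 0 := by
    have hbL : b * L₀ = π := by rw [hb]; field_simp
    simp [hWdef, hgdef, hg'def, hbcL, hbL]
  have hqpos : 0 < ∫ ξ in (0:ℝ)..L₀, q ξ := by
    apply intervalIntegral.intervalIntegral_pos_of_pos_on hqint _ hL₀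
    intro ξ hξ
    have hsinpos : 0 < sin (b * ξ) := by
      apply Real.sin_pos_of_pos_of_lt_pi (mul_pos hb_pos hξ.1)
      calc b * ξ < b * L₀ := by
            exact mul_lt_mul_of_pos_left hξ.2 hb_pos
        _ = π := by rw [hb]; field_simp
    have := hpos ξ hξ
    simp only [hqdef, hgdef]
    exact mul_pos (exp_pos _) (mul_pos this (mul_pos (exp_pos _) hsinpos))
  have hzero : (lam' - lam) / D * ∫ ξ in (0:ℝ)..L₀, q ξ = 0 := by
    rw [← intervalIntegral.integral_const_mul, hFTC, hW0, hWL, sub_zero]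
  have hlameq : lam = lam' := by
    rcases mul_eq_zero.1 hzero with h | h
    · have : lam' - lam = 0 := by
        field_simp at h
        simpa using h
      linarith
    · exact absurd h hqpos.ne'
  rw [hlameq, hlam', hb, ha]
  field_simp
  ring
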